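/- Let X = ℓ_∞³ and Y a two-dimensional real Banach space, and let T : X → Y be linear with ||T|| = 1, M_T ∩ Ext(B_X) = {±x₁,±x₂,±x₃,±x₄} with x₁=(1,1,1), x₂=(-1,1,1), x₃=(-1,-1,1), x₄=(1,-1,1). If Tx₁ = -Tx₂ and Tx₁ ∈ Ext(B_Y), then T has rank 1. -/

import Mathlib

open Metric

/-- Case of Theorem 3.6(III): if `M_T ∩ Ext(B_{ℓ³_∞}) = {±x₁,±x₂,±x₃,±x₄}`,
`Tx₁ = -Tx₂` and `Tx₁ ∈ Ext(B_Y)`, then `T` has rank `1`. -/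
theorem stmt14 {Y : Type*} [NormedAddCommGroup Y] [NormedSpace ℝ Y]
    (hY : Module.finrank ℝ Y = 2)
    (T : (Fin 3 → ℝ) →L[ℝ] Y) (hT : ‖T‖ = 1)
    (x₁ x₂ x₃ x₄ : Fin 3 → ℝ)
    (h₁ : x₁ = ![1, 1, 1]) (h₂ : x₂ = ![-1, 1, 1]) (h₃ : x₃ = ![-1, -1, 1])
    (h₄ : x₄ = ![1, -1, 1])
    (hMT : {z : Fin 3 → ℝ | ‖z‖ = 1 ∧ ‖T z‖ = 1} ∩
        Set.extremePoints ℝ (closedBall (0 : Fin 3 → ℝ) 1) =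
      {x₁, -x₁, x₂, -x₂, x₃, -x₃, x₄, -x₄})
    (h12 : T x₁ = -T x₂)
    (hext : T x₁ ∈ Set.extremePoints ℝ (closedBall (0 : Y) 1)) :
    Module.finrank ℝ ↥(LinearMap.range (T : (Fin 3 → ℝ) →ₗ[ℝ] Y)) = 1 := by
  -- norms of the images
  have hmem : ∀ z ∈ ({x₁, -x₁, x₂, -x₂, x₃, -x₃, x₄, -x₄} : Set (Fin 3 → ℝ)),
      ‖T z‖ = 1 := by
    intro z hz
    rw [← hMT] at hz
    exact hz.1.2
  have hn1 : ‖T x₁‖ = 1 := hmem x₁ (by simp)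
  have hn3 : ‖T x₃‖ = 1 := hmem x₃ (by simp)
  have hn4 : ‖T x₄‖ = 1 := hmem x₄ (by simp)
  -- x₄ = x₁ - x₂ + x₃
  have hx4 : x₄ = x₁ - x₂ + x₃ := by
    subst h₁ h₂ h₃ h₄
    funext i
    fin_cases i <;> norm_num
  have hT4 : T x₄ = 2 • T x₁ + T x₃ := by
    rw [hx4, map_add, map_sub, h12]
    module
  -- T x₁ is the midpoint of T x₄ and -T x₃
  have hmid : T x₁ ∈ openSegment ℝ (T x₄) (-(T x₃)) := by
    refine ⟨1/2, 1/2, by norm_num, by norm_num, by norm_num, ?_⟩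
    rw [hT4]
    module
  have hkey := hext.2 (x₁ := T x₄) (by simp [mem_closedBall_zero_iff, hn4])
    (x₂ := -(T x₃)) (by simp [mem_closedBall_zero_iff, hn3]) hmid
  have hT3 : T x₃ = -T x₁ := by
    have hkey2 := hext.2 (x₁ := -(T x₃)) (by simp [mem_closedBall_zero_iff, hn3])
      (x₂ := T x₄) (by simp [mem_closedBall_zero_iff, hn4]) (by rw [openSegment_symm]; exact hmid)
    rw [← hkey2, neg_neg]
  have hT2 : T x₂ = -T x₁ := by rw [h12, neg_neg]
  -- every T x is a multiple of T x₁
  have hTx : ∀ x : Fin 3 → ℝ, T x = (x 0) • T x₁ := by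
    intro x
    have hdecomp : x = ((x 0 + x 2)/2) • x₁ + ((x 1 - x 0)/2) • x₂
        + ((x 2 - x 1)/2) • x₃ := by
      subst h₁ h₂ h₃
      funext i
      fin_cases i <;> simp <;> ring
    have : T x = ((x 0 + x 2)/2) • T x₁ + ((x 1 - x 0)/2) • T x₂
        + ((x 2 - x 1)/2) • T x₃ := by
      conv_lhs => rw [hdecomp]
      simp
    rw [this, hT2, hT3]
    module
  have hne : T x₁ ≠ 0 := by
    intro h; rw [h, norm_zero] at hn1; norm_num at hn1
  have hrange : LinearMap.range (T : (Fin 3 → ℝ) →ₗ[ℝ] Y) = ℝ ∙ T x₁ := by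
    apply le_antisymm
    · rintro y ⟨x, rfl⟩
      exact Submodule.mem_span_singleton.2 ⟨x 0, (hTx x).symm⟩
    · rw [Submodule.span_singleton_le_iff_mem]
      exact ⟨x₁, rfl⟩
  rw [hrange, finrank_span_singleton hne]
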